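/- Let (X,T) be a compact Hausdorff dynamical system with a transitive point x*. The following are equivalent: (i) (X,T) is WAP; (ii) E(X,T) is abelian; (iii) p(q(x*)) = q(p(x*)) for all p,q ∈ E(X,T). When these hold, the evaluation map ev_{x*} : E(X,T) → X, p ↦ p(x*), is a homeomorphism satisfying ev_{x*}(T∘p) = T(ev_{x*}(p)) for all p ∈ E(X,T), and X contains exactly one minimal subset (nonempty closed invariant set containing no proper nonempty closed invariant subset). -/

import Mathlib

open Filter Topology

/-- The `n`-th iterate (for `n : ℤ`) of a homeomorphism `T`. -/
def hIter {X : Type*} [TopologicalSpace X] (T : X ≃ₜ X) (n : ℤ) : X → X :=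
  fun x => (T.toEquiv ^ n) x

/-- The enveloping semigroup of `(X,T)`: the closure of `{Tⁿ : n ∈ ℤ}` in `X → X` with
the product (pointwise convergence) topology. -/
def envSG {X : Type*} [TopologicalSpace X] (T : X ≃ₜ X) : Set (X → X) :=
  closure (Set.range (hIter T))

/-- A minimal subset: a nonempty closed invariant set with no proper nonempty closed
invariant subset. -/
def IsMinimalSet {X : Type*} [TopologicalSpace X] (T : X ≃ₜ X) (M : Set X) : Prop :=
  M.Nonempty ∧ IsClosed M ∧ ⇑T '' M = M ∧
    ∀ M' ⊆ M, M'.Nonempty → IsClosed M' → ⇑T '' M' = M' → M' = M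

section Aux

variable {X : Type*} [TopologicalSpace X]

lemma hIter_one_add (T : X ≃ₜ X) (n : ℤ) (x : X) : hIter T (1 + n) x = T (hIter T n x) := by
  simp [hIter, zpow_add, Equiv.Perm.mul_apply]

lemma hIter_neg_one_add (T : X ≃ₜ X) (n : ℤ) (x : X) :
    hIter T (-1 + n) x = T.symm (hIter T n x) := by
  simp [hIter, zpow_add, Equiv.Perm.mul_apply]

lemma hIter_add (T : X ≃ₜ X) (m n : ℤ) : hIter T (m + n) = hIter T m ∘ hIter T n := by
  funext x; simp [hIter, zpow_add, Equiv.Perm.mul_apply]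

lemma continuous_hIter (T : X ≃ₜ X) (n : ℤ) : Continuous (hIter T n) := by
  induction n using Int.induction_on with
  | zero =>
      rw [show hIter T 0 = id from funext fun x => by simp [hIter]]; exact continuous_id
  | succ k ih =>
      have h : hIter T (k + 1) = ⇑T ∘ hIter T k := by
        funext x; rw [add_comm, hIter_one_add]; rfl
      rw [h]; exact T.continuous.comp ih
  | pred k ih =>
      have h : hIter T (-k - 1) = ⇑T.symm ∘ hIter T (-k) := by
        funext x
        have h2 := hIter_neg_one_add T (-k) x
        rw [show (-1 + -k : ℤ) = -k - 1 by ring] at h2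
        rw [h2]; rfl
      rw [h]; exact T.symm.continuous.comp ih

lemma hIter_mem_envSG (T : X ≃ₜ X) (n : ℤ) : hIter T n ∈ envSG T :=
  subset_closure ⟨n, rfl⟩

lemma continuous_comp_right (r : X → X) : Continuous fun q : X → X => q ∘ r :=
  continuous_pi fun x => continuous_apply (r x)

lemma continuous_comp_left {f : X → X} (hf : Continuous f) :
    Continuous fun q : X → X => f ∘ q :=
  continuous_pi fun x => hf.comp (continuous_apply x)

lemma hIter_comp_mem (T : X ≃ₜ X) (n : ℤ) {p : X → X} (hp : p ∈ envSG T) :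
    hIter T n ∘ p ∈ envSG T := by
  have h1 : (fun q : X → X => hIter T n ∘ q) '' Set.range (hIter T) ⊆ Set.range (hIter T) := by
    rintro _ ⟨_, ⟨m, rfl⟩, rfl⟩
    exact ⟨n + m, hIter_add T n m⟩
  have h2 := image_closure_subset_closure_image
    (f := fun q : X → X => hIter T n ∘ q) (s := Set.range (hIter T))
    (continuous_comp_left (continuous_hIter T n))
  exact closure_mono h1 (h2 ⟨p, hp, rfl⟩)

lemma hIter_comm [T2Space X] (T : X ≃ₜ X) (n : ℤ) {p : X → X} (hp : p ∈ envSG T) :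
    hIter T n ∘ p = p ∘ hIter T n := by
  have hcl : IsClosed {q : X → X | hIter T n ∘ q = q ∘ hIter T n} :=
    isClosed_eq (continuous_comp_left (continuous_hIter T n)) (continuous_comp_right _)
  have hsub : Set.range (hIter T) ⊆ {q : X → X | hIter T n ∘ q = q ∘ hIter T n} := by
    rintro _ ⟨m, rfl⟩
    show hIter T n ∘ hIter T m = hIter T m ∘ hIter T n
    rw [← hIter_add, ← hIter_add, add_comm]
  exact closure_minimal hsub hcl hp

lemma comm_of_continuous [T2Space X] (T : X ≃ₜ X)
    (hcont : ∀ p ∈ envSG T, Continuous p) :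
    ∀ p ∈ envSG T, ∀ q ∈ envSG T, ∀ x : X, p (q x) = q (p x) := by
  intro p hp q hq x
  have hpc : Continuous p := hcont p hp
  have hcl : IsClosed {r : X → X | p ∘ r = r ∘ p} :=
    isClosed_eq (continuous_comp_left hpc) (continuous_comp_right p)
  have hsub : Set.range (hIter T) ⊆ {r : X → X | p ∘ r = r ∘ p} := by
    rintro _ ⟨n, rfl⟩
    exact (hIter_comm T n hp).symm
  exact congrFun (closure_minimal hsub hcl hq) x

lemma apply_mem_closure_orbit (T : X ≃ₜ X) {p : X → X} (hp : p ∈ envSG T) (x : X) :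
    p x ∈ closure (Set.range fun n : ℤ => hIter T n x) := by
  have h := image_closure_subset_closure_image
    (f := fun q : X → X => q x) (s := Set.range (hIter T)) (continuous_apply x)
  have h2 : p x ∈ closure ((fun q : X → X => q x) '' Set.range (hIter T)) := h ⟨p, hp, rfl⟩
  rwa [← Set.range_comp] at h2

lemma hIter_mem_invariant (T : X ≃ₜ X) {M : Set X} (hM : ⇑T '' M = M) {x : X} (hx : x ∈ M)
    (n : ℤ) : hIter T n x ∈ M := by
  induction n using Int.induction_on with
  | zero => simpa [hIter] using hx
  | succ k ih =>
      have h : hIter T (k + 1) x = T (hIter T k x) := by rw [add_comm, hIter_one_add]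
      rw [h, ← hM]; exact ⟨_, ih, rfl⟩
  | pred k ih =>
      have h : hIter T (-k - 1) x = T.symm (hIter T (-k) x) := by
        rw [show (-k - 1 : ℤ) = -1 + -k by ring, hIter_neg_one_add]
      rw [← hM] at ih
      obtain ⟨y, hy, hyx⟩ := ih
      have h3 : hIter T (-k - 1) x = y := by
        rw [h, ← hyx, Homeomorph.symm_apply_apply]
      rw [h3]; exact hy

lemma exists_minimalSet {X : Type*} [TopologicalSpace X] [CompactSpace X] [Nonempty X]
    (T : X ≃ₜ X) : ∃ M : Set X, IsMinimalSet T M := by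
  set S : Set (Set X) := {M | M.Nonempty ∧ IsClosed M ∧ ⇑T '' M = M} with hS
  have huniv : Set.univ ∈ S :=
    ⟨Set.univ_nonempty, isClosed_univ, by rw [Set.image_univ, T.surjective.range_eq]⟩
  have hchainC : ∀ c ⊆ S, IsChain (· ⊆ ·) c → c.Nonempty →
      ∃ lb ∈ S, ∀ s ∈ c, lb ⊆ s := by
    intro c hcS hchain hcne
    haveI : Nonempty c := hcne.coe_sort
    refine ⟨⋂ M : c, (M : Set X), ⟨?_, ?_, ?_⟩,
      fun s hs => Set.iInter_subset_of_subset ⟨s, hs⟩ le_rfl⟩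
    · apply IsCompact.nonempty_iInter_of_directed_nonempty_isCompact_isClosed
      · intro i j
        rcases hchain.total i.2 j.2 with h | h
        · exact ⟨i, le_rfl, h⟩
        · exact ⟨j, h, le_rfl⟩
      · exact fun i => (hcS i.2).1
      · exact fun i => (hcS i.2).2.1.isCompact
      · exact fun i => (hcS i.2).2.1
    · exact isClosed_iInter fun i => (hcS i.2).2.1
    · rw [Set.image_iInter T.bijective]
      exact Set.iInter_congr fun i => (hcS i.2).2.2
  obtain ⟨m, -, hm⟩ := zorn_superset_nonempty S hchainC Set.univ huniv
  refine ⟨m, hm.prop.1, hm.prop.2.1, hm.prop.2.2, fun M' hsub hne hcl hinv => ?_⟩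
  exact Set.Subset.antisymm hsub (hm.2 ⟨hne, hcl, hinv⟩ hsub)

end Aux

section Main

variable {X : Type*} [TopologicalSpace X] [CompactSpace X] [T2Space X] [Nonempty X]

lemma ev_surj (T : X ≃ₜ X) (xs : X)
    (hxs : Dense (Set.range fun n : ℤ => hIter T n xs)) (x : X) :
    ∃ p ∈ envSG T, p xs = x := by
  have hEcompact : IsCompact (envSG T) := isClosed_closure.isCompact
  have hcl : IsClosed ((fun p : X → X => p xs) '' envSG T) :=
    (hEcompact.image (continuous_apply xs)).isClosed
  have hsub : (Set.range fun n : ℤ => hIter T n xs) ⊆ (fun p : X → X => p xs) '' envSG T := by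
    rintro _ ⟨n, rfl⟩
    exact ⟨hIter T n, hIter_mem_envSG T n, rfl⟩
  have huniv : Set.univ ⊆ (fun p : X → X => p xs) '' envSG T := by
    rw [← hxs.closure_eq]
    exact hcl.closure_subset_iff.mpr hsub
  obtain ⟨p, hp, hpx⟩ := huniv (Set.mem_univ x)
  exact ⟨p, hp, hpx⟩

lemma homeo_of_comm (T : X ≃ₜ X) (xs : X)
    (hxs : Dense (Set.range fun n : ℤ => hIter T n xs))
    (hiii : ∀ p ∈ envSG T, ∀ q ∈ envSG T, p (q xs) = q (p xs)) :
    ∃ h : ↥(envSG T) ≃ₜ X, ∀ p : ↥(envSG T), h p = (p : X → X) xs := by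
  haveI : CompactSpace ↥(envSG T) := isCompact_iff_compactSpace.mp isClosed_closure.isCompact
  have hinj : Function.Injective (fun p : ↥(envSG T) => (p : X → X) xs) := by
    rintro ⟨p, hp⟩ ⟨q, hq⟩ h
    simp only at h
    ext x
    obtain ⟨r, hr, rfl⟩ := ev_surj T xs hxs x
    calc p (r xs) = r (p xs) := hiii p hp r hr
      _ = r (q xs) := by rw [h]
      _ = q (r xs) := (hiii q hq r hr).symm
  have hsurjf : Function.Surjective (fun p : ↥(envSG T) => (p : X → X) xs) := by
    intro x
    obtain ⟨p, hp, hpx⟩ := ev_surj T xs hxs x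
    exact ⟨⟨p, hp⟩, hpx⟩
  have hcont : Continuous (fun p : ↥(envSG T) => (p : X → X) xs) :=
    (continuous_apply xs).comp continuous_subtype_val
  let e : ↥(envSG T) ≃ X := Equiv.ofBijective _ ⟨hinj, hsurjf⟩
  have hcont' : Continuous ⇑e := hcont
  exact ⟨hcont'.homeoOfEquivCompactToT2, fun p => rfl⟩

lemma continuous_of_comm (T : X ≃ₜ X) (xs : X)
    (hxs : Dense (Set.range fun n : ℤ => hIter T n xs))
    (hiii : ∀ p ∈ envSG T, ∀ q ∈ envSG T, p (q xs) = q (p xs)) :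
    ∀ p ∈ envSG T, Continuous p := by
  obtain ⟨h, hh⟩ := homeo_of_comm T xs hxs hiii
  intro p hp
  have hkey : p = fun x => ((h.symm x : X → X)) (p xs) := by
    funext x
    have hx : ((h.symm x : X → X)) xs = x := by
      have h2 := hh (h.symm x)
      rw [h.apply_symm_apply] at h2
      exact h2.symm
    conv_lhs => rw [← hx]
    exact hiii p hp _ (h.symm x).2
  rw [hkey]
  exact (continuous_apply (p xs)).comp (continuous_subtype_val.comp h.symm.continuous)

lemma minimal_unique (T : X ≃ₜ X) (xs : X)
    (hxs : Dense (Set.range fun n : ℤ => hIter T n xs))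
    (hiii : ∀ p ∈ envSG T, ∀ q ∈ envSG T, p (q xs) = q (p xs))
    {M₁ M₂ : Set X} (h1 : IsMinimalSet T M₁) (h2 : IsMinimalSet T M₂) : M₁ = M₂ := by
  obtain ⟨x₁, hx₁⟩ := h1.1
  obtain ⟨x₂, hx₂⟩ := h2.1
  obtain ⟨p, hp, hpxs⟩ := ev_surj T xs hxs x₁
  obtain ⟨q, hq, hqxs⟩ := ev_surj T xs hxs x₂
  have horb1 : closure (Set.range fun n : ℤ => hIter T n x₁) ⊆ M₁ :=
    closure_minimal (by rintro _ ⟨n, rfl⟩; exact hIter_mem_invariant T h1.2.2.1 hx₁ n) h1.2.1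
  have horb2 : closure (Set.range fun n : ℤ => hIter T n x₂) ⊆ M₂ :=
    closure_minimal (by rintro _ ⟨n, rfl⟩; exact hIter_mem_invariant T h2.2.2.1 hx₂ n) h2.2.1
  have hq1 : q x₁ ∈ M₁ := horb1 (apply_mem_closure_orbit T hq x₁)
  have hp2 : p x₂ ∈ M₂ := horb2 (apply_mem_closure_orbit T hp x₂)
  have heq : q x₁ = p x₂ := by rw [← hpxs, ← hqxs]; exact hiii q hq p hp
  have hne : (M₁ ∩ M₂).Nonempty := ⟨q x₁, hq1, heq ▸ hp2⟩
  have hclosed : IsClosed (M₁ ∩ M₂) := h1.2.1.inter h2.2.1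
  have hinv : ⇑T '' (M₁ ∩ M₂) = M₁ ∩ M₂ := by
    rw [Set.image_inter T.injective, h1.2.2.1, h2.2.2.1]
  have e1 := h1.2.2.2 (M₁ ∩ M₂) Set.inter_subset_left hne hclosed hinv
  have e2 := h2.2.2.2 (M₁ ∩ M₂) Set.inter_subset_right hne hclosed hinv
  exact e1.symm.trans e2

end Main

theorem stmt1 {X : Type*} [TopologicalSpace X] [CompactSpace X] [T2Space X] [Nonempty X]
    (T : X ≃ₜ X) (xs : X) (hxs : Dense (Set.range fun n : ℤ => hIter T n xs)) :
    ((∀ p ∈ envSG T, Continuous p) ↔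
      (∀ p ∈ envSG T, ∀ q ∈ envSG T, ∀ x : X, p (q x) = q (p x))) ∧
    ((∀ p ∈ envSG T, Continuous p) ↔
      (∀ p ∈ envSG T, ∀ q ∈ envSG T, p (q xs) = q (p xs))) ∧
    ((∀ p ∈ envSG T, Continuous p) →
      ((∃ h : ↥(envSG T) ≃ₜ X, ∀ p : ↥(envSG T), h p = (p : X → X) xs) ∧
       (∀ p ∈ envSG T, (⇑T ∘ p) ∈ envSG T ∧ (⇑T ∘ p) xs = T (p xs)) ∧
       (∃! M : Set X, IsMinimalSet T M))) := by
  refine ⟨⟨fun hi => comm_of_continuous T hi,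
      fun hii => continuous_of_comm T xs hxs (fun p hp q hq => hii p hp q hq xs)⟩,
    ⟨fun hi p hp q hq => comm_of_continuous T hi p hp q hq xs,
      fun hiii => continuous_of_comm T xs hxs hiii⟩,
    fun hi => ?_⟩
  have hiii : ∀ p ∈ envSG T, ∀ q ∈ envSG T, p (q xs) = q (p xs) :=
    fun p hp q hq => comm_of_continuous T hi p hp q hq xs
  refine ⟨homeo_of_comm T xs hxs hiii, fun p hp => ⟨?_, rfl⟩, ?_⟩
  · have h : ⇑T ∘ p = hIter T 1 ∘ p := by
      funext x; simp [hIter, zpow_one]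
    rw [h]; exact hIter_comp_mem T 1 hp
  · obtain ⟨M, hM⟩ := exists_minimalSet T
    exact ⟨M, hM, fun M' hM' => minimal_unique T xs hxs hiii hM' hM⟩
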